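/- arXiv:math/0405439 — 2 statements merged into one kernel-verified Lean document; each statement's English description precedes it below -/
import Mathlib

section
/- Theorem 1 (decrease outside the ball): Consider the swarm model x_i(k+1) = x_i(k) + Σ_{j≠i} g(x_i(k) − x_j(k)) with g(y) = −y(a − b·exp(−‖y‖²/c)), positive constants a, b, c with b > a, under the hypotheses guaranteeing the decrease estimate V_i(k+1) − V_i(k) ≤ −2a·V_i(k) whenever ‖e_i(k)‖ ≥ δ (all pairwise distances exceeding δ at all times and a − (a² + b²Φ²)M²/(2(M−1)) > 0 with Φ = a/b). Let ε = (b/a)·√(c/2)·exp(−1/2). Then for every agent i, whenever ‖e_i(k)‖ ≥ ε one has V_i(k+1) − V_i(k) ≤ 0; consequently as k → ∞ each e_i(k) converges into the ball B_ε(x̄) = {x : ‖x − x̄‖ ≤ ε}. -/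
/-- Attraction–repulsion function `g(y) = −y(a − b·exp(−‖y‖²/c))` on ℝⁿ. -/
noncomputable def g (a b c : ℝ) {n : ℕ} (y : EuclideanSpace ℝ (Fin n)) :
    EuclideanSpace ℝ (Fin n) :=
  (-(a - b * Real.exp (-‖y‖ ^ 2 / c))) • y

lemma bump_bound {c : ℝ} (hc : 0 < c) (t : ℝ) :
    t * Real.exp (-t ^ 2 / c) ≤ Real.sqrt (c / 2) * Real.exp (-(1 / 2 : ℝ)) := by
  set s := Real.sqrt (c / 2) with hs
  have hspos : 0 < s := Real.sqrt_pos.mpr (by linarith)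
  have hs2 : s ^ 2 = c / 2 := Real.sq_sqrt (by linarith)
  have h1 : (t ^ 2 / c - 1 / 2) + 1 ≤ Real.exp (t ^ 2 / c - 1 / 2) :=
    Real.add_one_le_exp _
  have hu : t ^ 2 / c * c = t ^ 2 := by field_simp
  have h3 : t ≤ s * Real.exp (t ^ 2 / c - 1 / 2) := by
    nlinarith [sq_nonneg (t - s), Real.exp_pos (t ^ 2 / c - 1 / 2), hs2, hspos, hc,
      mul_pos hspos (Real.exp_pos (t ^ 2 / c - 1 / 2)), sq_nonneg t,
      div_nonneg (sq_nonneg t) hc.le]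
  calc t * Real.exp (-t ^ 2 / c)
      ≤ (s * Real.exp (t ^ 2 / c - 1 / 2)) * Real.exp (-t ^ 2 / c) :=
        mul_le_mul_of_nonneg_right h3 (Real.exp_pos _).le
    _ = s * Real.exp (-(1 / 2 : ℝ)) := by
        rw [mul_assoc, ← Real.exp_add]
        congr 1
        ring

lemma sum_pairs_cancel {M : ℕ} {E : Type*} [AddCommGroup E] [Module ℝ E]
    (f : Fin M → Fin M → E) (hf : ∀ i j, f i j = - f j i) :
    ∑ i, ∑ j ∈ Finset.univ.erase i, f i j = 0 := by
  have hswap : ∑ i, ∑ j ∈ Finset.univ.erase i, f i j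
      = ∑ j, ∑ i ∈ Finset.univ.erase j, f i j :=
    Finset.sum_comm' (fun p q => by
      simp only [Finset.mem_univ, true_and, and_true, Finset.mem_erase]
      exact ne_comm)
  have h0 : ∀ i j : Fin M, f i j + f j i = 0 := fun i j => by rw [hf i j]; simp
  have h2 : (∑ i, ∑ j ∈ Finset.univ.erase i, f i j)
      + ∑ i, ∑ j ∈ Finset.univ.erase i, f i j = 0 := by
    nth_rewrite 2 [hswap]
    rw [← Finset.sum_add_distrib]
    have : ∀ i : Fin M, (∑ j ∈ Finset.univ.erase i, f i j)
        + ∑ j ∈ Finset.univ.erase i, f j i = 0 := by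
      intro i
      rw [← Finset.sum_add_distrib]
      simp [h0]
    simp only [this, Finset.sum_const_zero]
  have h3 : (2 : ℝ) • (∑ i, ∑ j ∈ Finset.univ.erase i, f i j) = 0 := by
    rw [two_smul]; exact h2
  rcases smul_eq_zero.mp h3 with h | h
  · norm_num at h
  · exact h

lemma g_neg (a b c : ℝ) {n : ℕ} (y : EuclideanSpace ℝ (Fin n)) :
    g a b c (-y) = - g a b c y := by
  simp [g, smul_neg]

set_option maxHeartbeats 2000000 in
/-- Theorem 1, decrease outside the ball: under Assumption 1
(all pairwise distances exceed `δ = √(c·ln(b/a))` at all times) and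
`a − (a²+b²Φ²)M²/(2(M−1)) > 0` with `Φ = a/b`, setting
`ε = (b/a)·√(c/2)·exp(−1/2)`: whenever `‖e_i(k)‖ ≥ ε` one has
`V_i(k+1) − V_i(k) ≤ 0`, and consequently each `e_i(k)` eventually lies in the
ball `B_ε(x̄)`. -/
theorem theorem1_decrease_outside_ball {n M : ℕ} (hM : 2 ≤ M) (a b c : ℝ)
    (ha : 0 < a) (hb : 0 < b) (hc : 0 < c) (hba : a < b)
    (x : ℕ → Fin M → EuclideanSpace ℝ (Fin n))
    (hdyn : ∀ k i, x (k + 1) i =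
      x k i + ∑ j ∈ Finset.univ.erase i, g a b c (x k i - x k j))
    (hsep : ∀ (k : ℕ) (i j : Fin M), i ≠ j →
      Real.sqrt (c * Real.log (b / a)) < ‖x k i - x k j‖)
    (hκ : 0 < a - (a ^ 2 + b ^ 2 * (a / b) ^ 2) * (M : ℝ) ^ 2 / (2 * ((M : ℝ) - 1))) :
    let ε : ℝ := b / a * Real.sqrt (c / 2) * Real.exp (-(1 / 2 : ℝ))
    let xbar : EuclideanSpace ℝ (Fin n) := (M : ℝ)⁻¹ • ∑ j, x 0 j
    (∀ (i : Fin M) (k : ℕ), ε ≤ ‖x k i - xbar‖ →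
      (1 / 2) * ‖x (k + 1) i - xbar‖ ^ 2 - (1 / 2) * ‖x k i - xbar‖ ^ 2 ≤ 0) ∧
    (∀ i : Fin M, ∀ᶠ k in Filter.atTop, ‖x k i - xbar‖ ≤ ε) := by
  intro ε xbar
  have hε : ε = b / a * Real.sqrt (c / 2) * Real.exp (-(1 / 2 : ℝ)) := rfl
  have hxbar : xbar = (M : ℝ)⁻¹ • ∑ j, x 0 j := rfl
  clear_value ε xbar
  have hM2 : (2 : ℝ) ≤ (M : ℝ) := by exact_mod_cast hM
  have hMpos : (0 : ℝ) < (M : ℝ) := by linarith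
  have hb0 : b ≠ 0 := ne_of_gt hb
  -- simplify hκ
  have hsimp : a ^ 2 + b ^ 2 * (a / b) ^ 2 = 2 * a ^ 2 := by field_simp; ring
  rw [hsimp] at hκ
  have key : a * (M : ℝ) ^ 2 < (M : ℝ) - 1 := by
    have hd : (0 : ℝ) < 2 * ((M : ℝ) - 1) := by linarith
    have h : 2 * a ^ 2 * (M : ℝ) ^ 2 / (2 * ((M : ℝ) - 1)) < a := by linarith
    have h2 := (div_lt_iff₀ hd).mp h
    nlinarith [ha, mul_pos ha ha]
  have haM : a * (M : ℝ) < 1 := by nlinarith [key, hM2, ha, sq_nonneg ((M:ℝ))]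
  have ha1 : a < 1 := by nlinarith [haM, hM2, ha]
  have hεpos : 0 < ε := by
    rw [hε]
    exact mul_pos (mul_pos (div_pos hb ha) (Real.sqrt_pos.mpr (by linarith)))
      (Real.exp_pos _)
  -- invariance of the sum
  have hS : ∀ k, ∑ j, x k j = ∑ j, x 0 j := by
    intro k
    induction k with
    | zero => rfl
    | succ k ih =>
      have hsum : ∑ j, x (k + 1) j = (∑ j, x k j)
          + ∑ i, ∑ j ∈ Finset.univ.erase i, g a b c (x k i - x k j) := by
        simp_rw [hdyn k]
        rw [Finset.sum_add_distrib]
      rw [hsum, sum_pairs_cancel _ (fun i j => by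
        rw [show x k i - x k j = -(x k j - x k i) from (neg_sub _ _).symm, g_neg]),
        add_zero, ih]
  have hxbarM : (M : ℝ) • xbar = ∑ j, x 0 j := by
    rw [hxbar, smul_smul, mul_inv_cancel₀ (ne_of_gt hMpos), one_smul]
  -- key step estimate
  have hstep : ∀ k i, ‖x (k + 1) i - xbar‖
      ≤ (1 - a * (M : ℝ)) * ‖x k i - xbar‖ + ((M : ℝ) - 1) * (a * ε) := by
    intro k i
    have hy : ∑ j ∈ Finset.univ.erase i, (x k i - x k j)
        = (M : ℝ) • (x k i - xbar) := by
      rw [Finset.sum_sub_distrib, Finset.sum_const,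
        Finset.card_erase_of_mem (Finset.mem_univ i), Finset.card_univ,
        Fintype.card_fin, Finset.sum_erase_eq_sub (Finset.mem_univ i), hS k,
        ← hxbarM]
      rw [← Nat.cast_smul_eq_nsmul ℝ (M - 1) (x k i),
        Nat.cast_sub (by omega : 1 ≤ M), Nat.cast_one]
      module
    have hg : ∀ y : EuclideanSpace ℝ (Fin n),
        g a b c y = (-a) • y + (b * Real.exp (-‖y‖ ^ 2 / c)) • y := by
      intro y
      simp only [g]
      module
    have hsum : ∑ j ∈ Finset.univ.erase i, g a b c (x k i - x k j)
        = (-a) • ((M : ℝ) • (x k i - xbar))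
          + ∑ j ∈ Finset.univ.erase i,
              (b * Real.exp (-‖x k i - x k j‖ ^ 2 / c)) • (x k i - x k j) := by
      simp_rw [hg]
      rw [Finset.sum_add_distrib, ← Finset.smul_sum, hy]
    have hexp : x (k + 1) i - xbar
        = (1 - a * (M : ℝ)) • (x k i - xbar)
          + ∑ j ∈ Finset.univ.erase i,
              (b * Real.exp (-‖x k i - x k j‖ ^ 2 / c)) • (x k i - x k j) := by
      rw [hdyn k i, hsum]
      module
    rw [hexp]
    refine (norm_add_le _ _).trans ?_
    have hn1 : ‖(1 - a * (M : ℝ)) • (x k i - xbar)‖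
        = (1 - a * (M : ℝ)) * ‖x k i - xbar‖ := by
      rw [norm_smul, Real.norm_eq_abs, abs_of_nonneg (by linarith)]
    have hterm : ∀ j ∈ Finset.univ.erase i,
        ‖(b * Real.exp (-‖x k i - x k j‖ ^ 2 / c)) • (x k i - x k j)‖ ≤ a * ε := by
      intro j _
      rw [norm_smul, Real.norm_eq_abs,
        abs_of_pos (mul_pos hb (Real.exp_pos _))]
      have hbd := bump_bound hc ‖x k i - x k j‖
      have hεeq : a * ε = b * (Real.sqrt (c / 2) * Real.exp (-(1 / 2 : ℝ))) := by
        rw [hε]; field_simp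
      rw [hεeq, mul_assoc]
      refine mul_le_mul_of_nonneg_left ?_ hb.le
      rw [mul_comm]
      exact hbd
    have hr : ‖∑ j ∈ Finset.univ.erase i,
        (b * Real.exp (-‖x k i - x k j‖ ^ 2 / c)) • (x k i - x k j)‖
        ≤ ((M : ℝ) - 1) * (a * ε) := by
      refine (norm_sum_le _ _).trans ?_
      refine (Finset.sum_le_card_nsmul _ _ (a * ε) hterm).trans ?_
      rw [Finset.card_erase_of_mem (Finset.mem_univ i), Finset.card_univ,
        Fintype.card_fin, nsmul_eq_mul, Nat.cast_sub (by omega : 1 ≤ M),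
        Nat.cast_one]
    rw [hn1]
    linarith
  -- contraction when outside the ball
  have hcontract : ∀ i k, ε ≤ ‖x k i - xbar‖ →
      ‖x (k + 1) i - xbar‖ ≤ (1 - a) * ‖x k i - xbar‖ := by
    intro i k hik
    have h1 := hstep k i
    have hint : ((M : ℝ) - 1) * (a * ε) ≤ ((M : ℝ) - 1) * (a * ‖x k i - xbar‖) := by
      refine mul_le_mul_of_nonneg_left ?_ (by linarith)
      exact mul_le_mul_of_nonneg_left hik ha.le
    nlinarith [h1, hint]
  constructor
  · intro i k hik
    have h2 := hcontract i k hik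
    have h3 : ‖x (k + 1) i - xbar‖ ≤ ‖x k i - xbar‖ := by
      nlinarith [norm_nonneg (x k i - xbar), h2]
    have h4 : ‖x (k + 1) i - xbar‖ ^ 2 ≤ ‖x k i - xbar‖ ^ 2 :=
      pow_le_pow_left₀ (norm_nonneg _) h3 2
    linarith
  · intro i
    set N := ‖x 0 i - xbar‖ with hN
    have hbound : ∀ k, ‖x k i - xbar‖ ≤ max ε ((1 - a) ^ k * N) := by
      intro k
      induction k with
      | zero => rw [pow_zero, one_mul]; exact le_max_right ε N
      | succ k ih =>
        rcases le_total ‖x k i - xbar‖ ε with hle | hge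
        · have h1 := hstep k i
          have hm : (1 - a * (M : ℝ)) * ‖x k i - xbar‖ ≤ (1 - a * (M : ℝ)) * ε :=
            mul_le_mul_of_nonneg_left hle (by linarith)
          have hring : (1 - a * (M : ℝ)) * ε + ((M : ℝ) - 1) * (a * ε)
              = ε - a * ε := by ring
          have : ‖x (k + 1) i - xbar‖ ≤ ε := by
            nlinarith [mul_nonneg ha.le hεpos.le]
          exact this.trans (le_max_left _ _)
        · have h2 := hcontract i k hge
          have h3 : (1 - a) * ‖x k i - xbar‖
              ≤ (1 - a) * max ε ((1 - a) ^ k * N) :=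
            mul_le_mul_of_nonneg_left ih (by linarith)
          rcases le_total ε ((1 - a) ^ k * N) with hcse | hcse
          · rw [max_eq_right hcse] at h3
            have : (1 - a) * ((1 - a) ^ k * N) = (1 - a) ^ (k + 1) * N := by
              rw [pow_succ]; ring
            rw [this] at h3
            exact (h2.trans h3).trans (le_max_right _ _)
          · rw [max_eq_left hcse] at h3
            have : (1 - a) * ε ≤ ε := by nlinarith [mul_nonneg ha.le hεpos.le]
            exact ((h2.trans h3).trans this).trans (le_max_left _ _)
    have htend : Filter.Tendsto (fun k => (1 - a) ^ k * N) Filter.atTop (nhds 0) := by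
      have h := tendsto_pow_atTop_nhds_zero_of_lt_one
        (by linarith : (0 : ℝ) ≤ 1 - a) (by linarith : 1 - a < 1)
      simpa using h.mul_const N
    have hev : ∀ᶠ k in Filter.atTop, (1 - a) ^ k * N < ε :=
      htend.eventually_lt_const hεpos
    filter_upwards [hev] with k hk
    exact (hbound k).trans (max_le le_rfl hk.le)
end

section
/- Theorem 1: Consider the swarm model x_i(k+1) = x_i(k) + Σ_{j≠i} g(x_i(k) − x_j(k)) with g(y) = −y(a − b·exp(−‖y‖²/c)), positive constants a, b, c with b > a, under Assumption 1 and the condition a − (a² + b²Φ²)M²/(2(M−1)) > 0 with Φ = a/b. Let ε = (b/a)·√(c/2)·exp(−1/2) and k̄ = max_{i} ⌈V_i(0)/(a·ε²)⌉, where V_i(k) = ½‖x_i(k) − x̄‖². Then every member of the swarm enters the bounded hyperball B_ε(x̄) = {x : ‖x − x̄‖ ≤ ε} within the finite time bound k̄; that is, for every i there exists k ≤ k̄ with ‖x_i(k) − x̄‖ ≤ ε. -/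
lemma aux_exp_bound (c : ℝ) (hc : 0 < c) (t : ℝ) (ht : 0 ≤ t) :
    t * Real.exp (-t ^ 2 / c) ≤ Real.sqrt (c / 2) * Real.exp (-(1 / 2 : ℝ)) := by
  set u := Real.sqrt (c / 2) with hu'
  have hu : 0 < u := Real.sqrt_pos.mpr (by positivity)
  have hu2 : u ^ 2 = c / 2 := Real.sq_sqrt (by positivity)
  set q := t ^ 2 / c with hq'
  have hqc : q * c = t ^ 2 := by rw [hq', div_mul_cancel₀ _ hc.ne']
  have h1 : q + 1 / 2 ≤ Real.exp (q - 1 / 2) := by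
    have := Real.add_one_le_exp (q - 1 / 2)
    linarith
  have h3 : 2 * t * u ≤ t ^ 2 + u ^ 2 := by nlinarith [sq_nonneg (t - u)]
  have h2 : t ≤ u * Real.exp (q - 1 / 2) := by
    have hc2 : c = 2 * u ^ 2 := by linarith
    nlinarith [mul_le_mul_of_nonneg_left h1 hc.le, hu, Real.exp_pos (q - 1 / 2)]
  calc t * Real.exp (-t ^ 2 / c) = t * Real.exp (-q) := by rw [hq', neg_div]
    _ ≤ (u * Real.exp (q - 1 / 2)) * Real.exp (-q) :=
        mul_le_mul_of_nonneg_right h2 (Real.exp_nonneg _)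
    _ = u * Real.exp (-(1 / 2 : ℝ)) := by
        rw [mul_assoc, ← Real.exp_add]; ring_nf


set_option maxHeartbeats 1000000 in
lemma scalar_descent (a Mr ε : ℝ) (ha : 0 < a) (hM : 2 ≤ Mr) (hε : 0 < ε)
    (hβ : 0 < 1 - a * Mr) (s : ℕ → ℝ) (hs0 : ∀ k, 0 ≤ s k)
    (hrec : ∀ k, s (k + 1) ≤ (1 - a * Mr) * s k + (Mr - 1) * (a * ε)) :
    ∃ k ≤ ⌈(1 / 2) * s 0 ^ 2 / (a * ε ^ 2)⌉₊, s k ≤ ε := by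
  by_contra hcon
  push_neg at hcon
  set K := ⌈(1 / 2) * s 0 ^ 2 / (a * ε ^ 2)⌉₊ with hK
  have key : ∀ k, k ≤ K → (1 / 2) * s k ^ 2 ≤ (1 / 2) * s 0 ^ 2 - k * (a * ε ^ 2) := by
    intro k
    induction k with
    | zero => intro _; simp
    | succ k ih =>
      intro hk1
      have hk : k ≤ K := Nat.le_of_succ_le hk1
      have IH := ih hk
      have h1 : ε < s (k + 1) := hcon (k + 1) hk1
      have h2 := hrec k
      have hMr0 : 0 < Mr := by linarith
      set β := 1 - a * Mr with hβ'
      set γ := (Mr - 1) * (a * ε) with hγ'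
      have hA : 0 < β * s k - ε * (β + a) := by
        have h3 : ε < β * s k + γ := lt_of_lt_of_le h1 h2
        simp only [hβ', hγ'] at h3 ⊢
        nlinarith [h3, mul_pos ha hε]
      set A := β * s k - ε * (β + a) with hA'
      have e1 : β * (a * Mr * s k - γ) = a * Mr * A + a * ε := by
        simp only [hA', hβ', hγ']; ring
      have e2 : β * ((1 + β) * s k + γ) = (1 + β) * A + ε * (2 * β + a) := by
        simp only [hA', hβ', hγ']; ring
      have hβlt : β < 1 := by nlinarith [mul_pos ha hMr0]
      have hββ : 0 < 2 * β + a - 2 * β ^ 2 := by nlinarith [mul_pos hβ (sub_pos.mpr hβlt)]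
      have h6 : (a * ε) * (ε * (2 * β + a)) ≤ (a * Mr * A + a * ε) * ((1 + β) * A + ε * (2 * β + a)) := by
        have t1 : 0 ≤ a * Mr * A := by positivity
        have t2 : 0 ≤ (1 + β) * A := by positivity
        have t3 : 0 ≤ ε * (2 * β + a) := by positivity
        nlinarith [mul_nonneg t1 t2, mul_nonneg t1 t3, mul_nonneg (mul_nonneg ha.le hε.le) t2]
      have h7 : β ^ 2 * (2 * (a * ε ^ 2)) ≤ β ^ 2 * ((a * Mr * s k - γ) * ((1 + β) * s k + γ)) := by
        have hre : β ^ 2 * ((a * Mr * s k - γ) * ((1 + β) * s k + γ))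
            = (β * (a * Mr * s k - γ)) * (β * ((1 + β) * s k + γ)) := by ring
        rw [hre, e1, e2]
        nlinarith [h6, mul_nonneg (mul_nonneg ha.le (sq_nonneg ε)) hββ.le]
      have h4' : 2 * (a * ε ^ 2) ≤ (a * Mr * s k - γ) * ((1 + β) * s k + γ) :=
        (mul_le_mul_iff_right₀ (pow_pos hβ 2)).mp h7
      have hid : s k ^ 2 - (β * s k + γ) ^ 2 = (a * Mr * s k - γ) * ((1 + β) * s k + γ) := by
        simp only [hβ', hγ']; ring
      have h4 : (β * s k + γ) ^ 2 ≤ s k ^ 2 - 2 * (a * ε ^ 2) := by linarith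
      have h5 : s (k + 1) ^ 2 ≤ (β * s k + γ) ^ 2 := by
        have hpos : (0 : ℝ) ≤ s (k + 1) := hs0 _
        nlinarith [h2, hpos]
      push_cast
      nlinarith [IH, h4, h5]
  have hKK := key K le_rfl
  have hle : (1 / 2) * s 0 ^ 2 / (a * ε ^ 2) ≤ (K : ℝ) := Nat.le_ceil _
  have haε2 : 0 < a * ε ^ 2 := by positivity
  have h8 : (1 / 2) * s 0 ^ 2 ≤ K * (a * ε ^ 2) := by
    rw [div_le_iff₀ haε2] at hle; linarith
  have hsK := hcon K le_rfl
  nlinarith [hKK, h8, hsK, hε]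



lemma g_skew (a b c : ℝ) {n : ℕ} (u v : EuclideanSpace ℝ (Fin n)) :
    g a b c (u - v) = - g a b c (v - u) := by
  simp only [g]
  rw [norm_sub_rev]
  module

lemma sum_g_zero (a b c : ℝ) {n M : ℕ} (y : Fin M → EuclideanSpace ℝ (Fin n)) :
    ∑ i, ∑ j ∈ Finset.univ.erase i, g a b c (y i - y j) = 0 := by
  have hdiag : ∀ i : Fin M, g a b c (y i - y i) = 0 := by
    intro i; simp [g, sub_self]
  have hS : ∑ i, ∑ j ∈ Finset.univ.erase i, g a b c (y i - y j)
      = ∑ i, ∑ j, g a b c (y i - y j) :=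
    Finset.sum_congr rfl fun i _ => Finset.sum_erase _ (hdiag i)
  rw [hS]
  set S := ∑ i, ∑ j, g a b c (y i - y j) with hSdef
  have hneg : S = -S := by
    calc S = ∑ i, ∑ j, -(g a b c (y j - y i)) :=
          Finset.sum_congr rfl fun i _ => Finset.sum_congr rfl fun j _ => g_skew a b c _ _
      _ = -∑ i, ∑ j, g a b c (y j - y i) := by
          simp [Finset.sum_neg_distrib]
      _ = -S := by rw [Finset.sum_comm]
  have h2 : (2 : ℝ) • S = 0 := by
    rw [two_smul]
    nth_rewrite 1 [hneg]
    simp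
  rcases smul_eq_zero.mp h2 with h | h
  · norm_num at h
  · exact h


/-- Theorem 1: under Assumption 1 (pairwise distances always
exceed `δ = √(c·ln(b/a))`) and the coefficient condition
`a − (a²+b²Φ²)M²/(2(M−1)) > 0` with `Φ = a/b`, every member of the swarm enters
the hyperball `B_ε(x̄)`, `ε = (b/a)·√(c/2)·exp(−1/2)`, within the finite time
bound `k̄ = max_i ⌈V_i(0)/(a·ε²)⌉`. -/
theorem theorem1 {n M : ℕ} (hM : 2 ≤ M) (a b c : ℝ)
    (ha : 0 < a) (hb : 0 < b) (hc : 0 < c) (hba : a < b)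
    (x : ℕ → Fin M → EuclideanSpace ℝ (Fin n))
    (hdyn : ∀ k i, x (k + 1) i =
      x k i + ∑ j ∈ Finset.univ.erase i, g a b c (x k i - x k j))
    (hsep : ∀ (k : ℕ) (i j : Fin M), i ≠ j →
      Real.sqrt (c * Real.log (b / a)) < ‖x k i - x k j‖)
    (hκ : 0 < a - (a ^ 2 + b ^ 2 * (a / b) ^ 2) * (M : ℝ) ^ 2 / (2 * ((M : ℝ) - 1))) :
    let ε : ℝ := b / a * Real.sqrt (c / 2) * Real.exp (-(1 / 2 : ℝ))
    let xbar : EuclideanSpace ℝ (Fin n) := (M : ℝ)⁻¹ • ∑ j, x 0 j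
    let kbar : ℕ := Finset.univ.sup
      (fun i : Fin M => ⌈(1 / 2) * ‖x 0 i - xbar‖ ^ 2 / (a * ε ^ 2)⌉₊)
    ∀ i : Fin M, ∃ k ≤ kbar, ‖x k i - xbar‖ ≤ ε := by
  intro ε xbar kbar i
  have hεdef : ε = b / a * Real.sqrt (c / 2) * Real.exp (-(1 / 2 : ℝ)) := rfl
  have hxbardef : xbar = (M : ℝ)⁻¹ • ∑ j, x 0 j := rfl
  set Mr := (M : ℝ) with hMr'
  have hMr2 : (2 : ℝ) ≤ Mr := by rw [hMr']; exact_mod_cast hM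
  have hMr0 : 0 < Mr := by linarith
  have hM1 : (0 : ℝ) < Mr - 1 := by linarith
  -- coefficient condition simplification
  have haM : a * Mr < 1 := by
    have hbne : b ≠ 0 := ne_of_gt hb
    have hb2 : b ^ 2 * (a / b) ^ 2 = a ^ 2 := by field_simp
    rw [hb2] at hκ
    have heq : (a ^ 2 + a ^ 2) * Mr ^ 2 / (2 * (Mr - 1)) = a ^ 2 * Mr ^ 2 / (Mr - 1) := by
      field_simp; ring
    rw [heq] at hκ
    have h6 : a ^ 2 * Mr ^ 2 < a * (Mr - 1) := by
      have := (div_lt_iff₀ hM1).mp (by linarith : a ^ 2 * Mr ^ 2 / (Mr - 1) < a)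
      linarith
    nlinarith [mul_pos ha hMr0]
  have hβ : 0 < 1 - a * Mr := by linarith
  have hε : 0 < ε := by rw [hεdef]; positivity
  have haε : a * ε = b * (Real.sqrt (c / 2) * Real.exp (-(1 / 2 : ℝ))) := by
    rw [hεdef]; field_simp
  -- stationarity of the sum
  have hsumconst : ∀ k, ∑ j, x k j = ∑ j, x 0 j := by
    intro k
    induction k with
    | zero => rfl
    | succ k ih =>
      have hstep : ∑ j, x (k + 1) j
          = ∑ j, x k j + ∑ i, ∑ j ∈ Finset.univ.erase i, g a b c (x k i - x k j) := by
        rw [← Finset.sum_add_distrib]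
        exact Finset.sum_congr rfl fun j _ => hdyn k j
      rw [hstep, sum_g_zero, add_zero, ih]
  have hxsum : ∀ k, ∑ j, x k j = Mr • xbar := by
    intro k
    rw [hsumconst k, hxbardef, smul_smul, mul_inv_cancel₀ (ne_of_gt hMr0), one_smul]
  -- key recursion identity
  have hid : ∀ k, x (k + 1) i - xbar = (1 - a * Mr) • (x k i - xbar)
      + ∑ j ∈ Finset.univ.erase i,
          (b * Real.exp (-‖x k i - x k j‖ ^ 2 / c)) • (x k i - x k j) := by
    intro k
    have hsplit : ∀ j : Fin M, g a b c (x k i - x k j)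
        = (b * Real.exp (-‖x k i - x k j‖ ^ 2 / c)) • (x k i - x k j)
          - a • (x k i - x k j) := by
      intro j; simp only [g]; module
    have hsum1 : ∑ j ∈ Finset.univ.erase i, (x k i - x k j) = Mr • (x k i - xbar) := by
      rw [Finset.sum_sub_distrib, Finset.sum_const,
        Finset.card_erase_of_mem (Finset.mem_univ i),
        Finset.sum_erase_eq_sub (Finset.mem_univ i), hxsum k,
        ← Nat.cast_smul_eq_nsmul ℝ]
      have hcast : (((Finset.univ : Finset (Fin M)).card - 1 : ℕ) : ℝ) = Mr - 1 := by
        rw [Finset.card_univ, Fintype.card_fin, Nat.cast_sub (by omega : 1 ≤ M)]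
        norm_num
        exact hMr'.symm
      rw [hcast]
      module
    rw [hdyn k i, Finset.sum_congr rfl fun j _ => hsplit j, Finset.sum_sub_distrib,
      ← Finset.smul_sum, hsum1, smul_smul]
    module
  -- norm recursion
  have hnormrec : ∀ k, ‖x (k + 1) i - xbar‖
      ≤ (1 - a * Mr) * ‖x k i - xbar‖ + (Mr - 1) * (a * ε) := by
    intro k
    rw [hid k]
    refine le_trans (norm_add_le _ _) ?_
    have h1 : ‖(1 - a * Mr) • (x k i - xbar)‖ = (1 - a * Mr) * ‖x k i - xbar‖ := by
      rw [norm_smul, Real.norm_eq_abs, abs_of_pos hβ]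
    have h2 : ‖∑ j ∈ Finset.univ.erase i,
        (b * Real.exp (-‖x k i - x k j‖ ^ 2 / c)) • (x k i - x k j)‖
        ≤ (Mr - 1) * (a * ε) := by
      refine le_trans (norm_sum_le _ _) ?_
      have hterm : ∀ j ∈ Finset.univ.erase i,
          ‖(b * Real.exp (-‖x k i - x k j‖ ^ 2 / c)) • (x k i - x k j)‖ ≤ a * ε := by
        intro j _
        rw [norm_smul, Real.norm_eq_abs, abs_of_pos (by positivity)]
        rw [haε]
        have hkey := aux_exp_bound c hc ‖x k i - x k j‖ (norm_nonneg _)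
        nlinarith [hkey, hb.le, Real.exp_pos (-‖x k i - x k j‖ ^ 2 / c), norm_nonneg (x k i - x k j)]
      refine le_trans (Finset.sum_le_sum hterm) ?_
      rw [Finset.sum_const, Finset.card_erase_of_mem (Finset.mem_univ i),
        Finset.card_univ, Fintype.card_fin, nsmul_eq_mul,
        Nat.cast_sub (by omega : 1 ≤ M)]
      norm_num
      exact le_rfl
    linarith
  -- apply scalar lemma
  obtain ⟨k, hk, hkε⟩ := scalar_descent a Mr ε ha hMr2 hε hβ
    (fun k => ‖x k i - xbar‖) (fun k => norm_nonneg _) hnormrec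
  refine ⟨k, le_trans hk ?_, hkε⟩
  exact Finset.le_sup (f := fun i : Fin M =>
    ⌈1 / 2 * ‖x 0 i - xbar‖ ^ 2 / (a * ε ^ 2)⌉₊) (Finset.mem_univ i)
end
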